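/- Single-monitor optimality in a star network: let w : Fin n → ℝ with 0 ≤ w(k) < 1 for all k and w sorted nonincreasing (w(0) ≥ w(1) ≥ … ≥ w(n−1)). Then for every index j, F_D(w(0)) + Σ_{k≠0} F_I(w(0), w(k)) ≥ F_D(w(j)) + Σ_{k≠j} F_I(w(j), w(k)), where F_D(v) = 12v²/((1+3v²)(1−v²)) and F_I(a,b) = 12a²b⁴/((1+3a²b²)(1−a²b²)). -/

import Mathlib

noncomputable def F_D (w : ℝ) : ℝ := 12 * w^2 / ((1 + 3 * w^2) * (1 - w^2))
noncomputable def F_I (a b : ℝ) : ℝ := 12 * a^2 * b^4 / ((1 + 3 * a^2 * b^2) * (1 - a^2 * b^2))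

private lemma sq_lt_one' {a : ℝ} (h0 : 0 ≤ a) (h1 : a < 1) : a^2 < 1 := by nlinarith

private lemma FI_mono_left {a b c : ℝ} (hb : 0 ≤ b) (hba : b ≤ a) (ha1 : a < 1)
    (hc : 0 ≤ c) (hc1 : c < 1) : F_I b c ≤ F_I a c := by
  have ha : 0 ≤ a := hb.trans hba
  have hx1 : a^2 < 1 := sq_lt_one' ha ha1
  have hc2 : c^2 < 1 := sq_lt_one' hc hc1
  have hac : a^2 * c^2 < 1 := by nlinarith [sq_nonneg a, sq_nonneg c]
  have hbc : b^2 * c^2 < 1 := by nlinarith [sq_nonneg b, sq_nonneg c, sq_nonneg a]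
  have hac0 : 0 ≤ a^2 * c^2 := by positivity
  have hbc0 : 0 ≤ b^2 * c^2 := by positivity
  have hd1 : 0 < (1 + 3 * a^2 * c^2) * (1 - a^2 * c^2) := by
    nlinarith [mul_nonneg hac0 (sub_nonneg.2 hac.le)]
  have hd2 : 0 < (1 + 3 * b^2 * c^2) * (1 - b^2 * c^2) := by
    nlinarith [mul_nonneg hbc0 (sub_nonneg.2 hbc.le)]
  rw [F_I, F_I, div_le_div_iff₀ hd2 hd1]
  nlinarith [mul_nonneg (mul_nonneg (sub_nonneg.2 hba) (by linarith : (0:ℝ) ≤ a + b))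
      (by positivity : (0:ℝ) ≤ c^4 * (1 + 3 * a^2 * c^2 * (b^2 * c^2))),
    sq_nonneg (a*c), sq_nonneg (b*c), sq_nonneg c]

private lemma key_swap {a b : ℝ} (hb : 0 ≤ b) (hba : b ≤ a) (ha1 : a < 1) :
    F_D b + F_I b a ≤ F_D a + F_I a b := by
  have ha : 0 ≤ a := hb.trans hba
  have hb1 : b < 1 := lt_of_le_of_lt hba ha1
  have hx1 : a^2 < 1 := sq_lt_one' ha ha1
  have hy1 : b^2 < 1 := sq_lt_one' hb hb1
  have hs1 : a^2 * b^2 < 1 := by nlinarith [sq_nonneg a, sq_nonneg b]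
  have hs0 : 0 ≤ a^2 * b^2 := by positivity
  have hD1 : 0 < (1 + 3 * a^2) * (1 - a^2) := by nlinarith [sq_nonneg a]
  have hD2 : 0 < (1 + 3 * b^2) * (1 - b^2) := by nlinarith [sq_nonneg b]
  have hD3 : 0 < (1 + 3 * (a^2*b^2)) * (1 - a^2*b^2) := by
    nlinarith [mul_nonneg hs0 (sub_nonneg.2 hs1.le)]
  have hn1 : (1 + 3 * a^2 * b^2) ≠ 0 := by nlinarith
  have hn2 : (1 - a^2 * b^2) ≠ 0 := by nlinarith
  have hn3 : (1 + 3 * b^2 * a^2) ≠ 0 := by nlinarith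
  have hn4 : (1 - b^2 * a^2) ≠ 0 := by nlinarith
  have hDD : F_D a - F_D b =
      12 * (a^2 - b^2) * (1 + 3 * (a^2*b^2)) /
        (((1 + 3 * a^2) * (1 - a^2)) * ((1 + 3 * b^2) * (1 - b^2))) := by
    rw [F_D, F_D]
    have : (1 - a^2) ≠ 0 := by nlinarith
    have : (1 - b^2) ≠ 0 := by nlinarith
    have : (1 + 3 * a^2) ≠ 0 := by nlinarith
    have : (1 + 3 * b^2) ≠ 0 := by nlinarith
    field_simp
    ring
  have hII : F_I b a - F_I a b =
      12 * (a^2*b^2) * (a^2 - b^2) / ((1 + 3 * (a^2*b^2)) * (1 - a^2*b^2)) := by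
    rw [F_I, F_I]
    field_simp
  have hineq : 12 * (a^2*b^2) * (a^2 - b^2) / ((1 + 3 * (a^2*b^2)) * (1 - a^2*b^2)) ≤
      12 * (a^2 - b^2) * (1 + 3 * (a^2*b^2)) /
        (((1 + 3 * a^2) * (1 - a^2)) * ((1 + 3 * b^2) * (1 - b^2))) := by
    rw [div_le_div_iff₀ hD3 (by positivity)]
    have hxy : 0 ≤ a^2 - b^2 := by nlinarith
    have h2 : (1 - a^2) * (1 - b^2) ≤ 1 - a^2*b^2 := by nlinarith [mul_nonneg ha hb]
    have h1 : (a^2*b^2) * ((1 + 3*a^2) * (1 + 3*b^2)) ≤ (1 + 3*(a^2*b^2))^2 := by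
      nlinarith [mul_nonneg (mul_nonneg (sq_nonneg a) (sq_nonneg b))
        (mul_nonneg (sub_nonneg.2 hx1.le) (sub_nonneg.2 hy1.le)), sq_nonneg (a*b)]
    have hB : (a^2*b^2) * ((1 + 3*a^2) * (1 - a^2) * ((1 + 3*b^2) * (1 - b^2))) ≤
        (1 + 3*(a^2*b^2))^2 * (1 - a^2*b^2) := by
      calc (a^2*b^2) * ((1 + 3*a^2) * (1 - a^2) * ((1 + 3*b^2) * (1 - b^2)))
          = ((a^2*b^2) * ((1 + 3*a^2) * (1 + 3*b^2))) * ((1 - a^2) * (1 - b^2)) := by ring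
        _ ≤ (1 + 3*(a^2*b^2))^2 * (1 - a^2*b^2) := by
            apply mul_le_mul h1 h2 (mul_nonneg (by linarith) (by linarith)) (by positivity)
    nlinarith [mul_le_mul_of_nonneg_left hB (by positivity : (0:ℝ) ≤ 12 * (a^2 - b^2))]
  linarith [hineq]

theorem single_monitor_optimal (n : ℕ) (w : Fin (n + 1) → ℝ)
    (h0 : ∀ k, 0 ≤ w k) (h1 : ∀ k, w k < 1) (hmono : Antitone w) (j : Fin (n + 1)) :
    F_D (w 0) + ∑ k ∈ Finset.univ.erase 0, F_I (w 0) (w k) ≥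
      F_D (w j) + ∑ k ∈ Finset.univ.erase j, F_I (w j) (w k) := by
  rcases eq_or_ne j 0 with rfl | hj0
  · exact le_rfl
  · have hw : w j ≤ w 0 := hmono (Fin.zero_le j)
    have hjmem : j ∈ (Finset.univ : Finset (Fin (n+1))).erase 0 :=
      Finset.mem_erase.2 ⟨hj0, Finset.mem_univ j⟩
    have h0mem : (0 : Fin (n+1)) ∈ (Finset.univ : Finset (Fin (n+1))).erase j :=
      Finset.mem_erase.2 ⟨Ne.symm hj0, Finset.mem_univ 0⟩
    rw [← Finset.add_sum_erase _ _ hjmem, ← Finset.add_sum_erase _ _ h0mem,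
      Finset.erase_right_comm]
    have hsum : ∑ k ∈ ((Finset.univ.erase j).erase 0 : Finset (Fin (n+1))), F_I (w j) (w k) ≤
        ∑ k ∈ (Finset.univ.erase j).erase 0, F_I (w 0) (w k) :=
      Finset.sum_le_sum fun k _ => FI_mono_left (h0 j) hw (h1 0) (h0 k) (h1 k)
    have hkey := key_swap (h0 j) hw (h1 0)
    simp only [ge_iff_le]
    linarith
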